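/- For θ ∈ (0, π/4] fixed, the function c ↦ ρ(θ,c) (the asymptotic rate of regularized Douglas–Rachford) attains its minimum over c ∈ (0,1) at c* = 1/(cos θ + sin θ)², with minimum value ρ(θ,c*) = cos θ/(cos θ + sin θ) = 1/(1 + tan θ); moreover ρ(θ,c) < cos θ for all c ∈ (c^♯, 1) where c^♯ = 1/(1 + 2cos θ) is the unique solution of ρ(θ,c) = cos θ on (0, c*). -/

import Mathlib

open Real

set_option maxHeartbeats 2000000

/-- The asymptotic rate `ρ(θ,c)` of regularized Douglas–Rachford. -/
noncomputable def rateDR (θ c : ℝ) : ℝ :=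
  if 1 / (Real.cos θ + Real.sin θ) ^ 2 ≤ c then
    Real.sqrt c * Real.cos θ
  else
    (c * Real.cos (2 * θ) + 1 + Real.sqrt (c ^ 2 * Real.cos (2 * θ) ^ 2 - 2 * c + 1)) / 2

/-- For fixed `θ ∈ (0, π/4]`: `c ↦ ρ(θ,c)` attains its minimum on `(0,1)` at
`c* = 1/(cos θ + sin θ)²`, with value `cos θ/(cos θ + sin θ) = 1/(1 + tan θ)`;
`ρ(θ,c) < cos θ` for all `c ∈ (c♯, 1)`, where `c♯ = 1/(1 + 2cos θ)` is the unique
solution of `ρ(θ,c) = cos θ` in `(0, c*)`. -/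
theorem stmt17 (θ : ℝ) (hθ : θ ∈ Set.Ioc 0 (π / 4)) :
    (∀ c ∈ Set.Ioo (0:ℝ) 1,
      rateDR θ (1 / (Real.cos θ + Real.sin θ) ^ 2) ≤ rateDR θ c) ∧
    rateDR θ (1 / (Real.cos θ + Real.sin θ) ^ 2)
      = Real.cos θ / (Real.cos θ + Real.sin θ) ∧
    Real.cos θ / (Real.cos θ + Real.sin θ) = 1 / (1 + Real.tan θ) ∧
    (∀ c ∈ Set.Ioo (1 / (1 + 2 * Real.cos θ)) 1, rateDR θ c < Real.cos θ) ∧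
    rateDR θ (1 / (1 + 2 * Real.cos θ)) = Real.cos θ ∧
    (∀ c ∈ Set.Ioo 0 (1 / (Real.cos θ + Real.sin θ) ^ 2),
      rateDR θ c = Real.cos θ → c = 1 / (1 + 2 * Real.cos θ)) := by
  obtain ⟨hθ0, hθ4⟩ := hθ
  have hπ : (0:ℝ) < π := Real.pi_pos
  set co := Real.cos θ with hco_def
  set s := Real.sin θ with hs_def
  have hpyth : co ^ 2 + s ^ 2 = 1 := Real.cos_sq_add_sin_sq θ
  have hs : 0 < s := Real.sin_pos_of_pos_of_lt_pi hθ0 (by linarith)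
  have hco : 0 < co := Real.cos_pos_of_mem_Ioo ⟨by linarith, by linarith⟩
  have hsle : s ≤ co := by
    have h1 : Real.sin θ ≤ Real.sin (π / 4) :=
      Real.sin_le_sin_of_le_of_le_pi_div_two (by linarith) (by linarith) hθ4
    have h2 : Real.cos (π / 4) ≤ Real.cos θ :=
      Real.cos_le_cos_of_nonneg_of_le_pi hθ0.le (by linarith) hθ4
    rw [Real.sin_pi_div_four] at h1
    rw [Real.cos_pi_div_four] at h2
    linarith
  have hco1 : co < 1 := by nlinarith
  have hcohalf : 1 / 2 < co := by nlinarith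
  have hc2 : Real.cos (2 * θ) = 2 * co ^ 2 - 1 := Real.cos_two_mul θ
  have hc2' : Real.cos (2 * θ) = co ^ 2 - s ^ 2 := by rw [hc2]; linarith
  have hc2nn : 0 ≤ Real.cos (2 * θ) := by rw [hc2]; nlinarith
  set K := co + s with hK_def
  have hK : 0 < K := by positivity
  have hKsq : 1 < K ^ 2 := by nlinarith
  have h2co : (0:ℝ) < 1 + 2 * co := by linarith
  -- c♯ < c*
  have hsharp_lt : 1 / (1 + 2 * co) < 1 / K ^ 2 := by
    apply one_div_lt_one_div_of_lt (by positivity)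
    nlinarith
  have hcstar_lt1 : 1 / K ^ 2 < 1 := by
    rw [div_lt_one (by positivity)]; exact hKsq
  -- value at c*
  have hsqrtcstar : Real.sqrt (1 / K ^ 2) = 1 / K := by
    rw [one_div, Real.sqrt_inv, Real.sqrt_sq hK.le, one_div]
  have hval : rateDR θ (1 / K ^ 2) = co / K := by
    rw [rateDR, if_pos le_rfl, hsqrtcstar]; ring
  refine ⟨?_, hval, ?_, ?_, ?_, ?_⟩
  · -- minimality
    rintro c ⟨hc0, hc1⟩
    rw [hval, rateDR]
    by_cases hcase : 1 / K ^ 2 ≤ c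
    · rw [if_pos hcase]
      have h1 : Real.sqrt (1 / K ^ 2) ≤ Real.sqrt c := Real.sqrt_le_sqrt hcase
      rw [hsqrtcstar] at h1
      have := mul_le_mul_of_nonneg_right h1 hco.le
      calc co / K = 1 / K * co := by ring
        _ ≤ Real.sqrt c * co := this
    · rw [if_neg hcase]
      push_neg at hcase
      set D := c ^ 2 * Real.cos (2 * θ) ^ 2 - 2 * c + 1 with hD_def
      set R := 2 * co - K - c * Real.cos (2 * θ) * K with hR_def
      have hDK : R ^ 2 < D * K ^ 2 := by
        have key : D * K ^ 2 - R ^ 2 = 4 * s * co * (1 - c * K ^ 2) := by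
          rw [hD_def, hR_def, hc2', hK_def]
          linear_combination (2 * c * (co + s) ^ 2) * hpyth
        have hlt : c * K ^ 2 < 1 := by
          rw [lt_div_iff₀ (by positivity : (0:ℝ) < K ^ 2)] at hcase
          exact hcase
        have hpos : 0 < 4 * s * co * (1 - c * K ^ 2) :=
          mul_pos (by positivity) (by linarith)
        linarith [sq_nonneg R]
      have hD0 : 0 < D := by
        by_contra h
        push_neg at h
        have h2 : D * K ^ 2 ≤ 0 := mul_nonpos_of_nonpos_of_nonneg h (sq_nonneg K)
        linarith [sq_nonneg R]
      have hsqrt : R < Real.sqrt D * K := by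
        have h1 : Real.sqrt (R ^ 2) < Real.sqrt (D * K ^ 2) :=
          Real.sqrt_lt_sqrt (sq_nonneg R) hDK
        rw [Real.sqrt_sq_eq_abs, Real.sqrt_mul hD0.le, Real.sqrt_sq hK.le] at h1
        exact lt_of_le_of_lt (le_abs_self R) h1
      rw [div_le_div_iff₀ hK (by norm_num : (0:ℝ) < 2)]
      have expand : (c * Real.cos (2 * θ) + 1 + Real.sqrt D) * K
          = c * Real.cos (2 * θ) * K + K + Real.sqrt D * K := by ring
      rw [hR_def] at hsqrt
      linarith
  · -- cos/(cos+sin) = 1/(1+tan)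
    rw [Real.tan_eq_sin_div_cos]
    rw [← hco_def, ← hs_def]
    field_simp
    exact hK_def.symm
  · -- ρ < cos on (c♯, 1)
    rintro c ⟨hcl, hc1⟩
    rw [rateDR]
    by_cases hcase : 1 / K ^ 2 ≤ c
    · rw [if_pos hcase]
      have hc0 : 0 ≤ c := le_trans (by positivity) hcase
      have h1 : Real.sqrt c < 1 := by
        rw [show (1:ℝ) = Real.sqrt 1 by simp]
        exact Real.sqrt_lt_sqrt hc0 hc1
      nlinarith [Real.sqrt_nonneg c]
    · rw [if_neg hcase]
      push_neg at hcase
      set D := c ^ 2 * Real.cos (2 * θ) ^ 2 - 2 * c + 1 with hD_def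
      set R' := 2 * co - 1 - c * Real.cos (2 * θ) with hR'_def
      have hcsharp : 1 < c * (1 + 2 * co) := by
        rw [div_lt_iff₀ h2co] at hcl; linarith
      have h2co2 : 0 ≤ 2 * co ^ 2 - 1 := by rw [hc2] at hc2nn; linarith
      have hR'pos : 0 < R' := by
        rw [hR'_def, hc2]
        have h1 : 0 ≤ (1 - c) * (2 * co ^ 2 - 1) := mul_nonneg (by linarith) h2co2
        nlinarith [mul_pos hco (by linarith : (0:ℝ) < 1 - co)]
      have hDR : D < R' ^ 2 := by
        have key : D - R' ^ 2 = 4 * co * (co - 1) * (c * (2 * co + 1) - 1) := by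
          rw [hD_def, hR'_def, hc2]; ring
        have hfac : 0 < c * (2 * co + 1) - 1 := by
          have : c * (2 * co + 1) = c * (1 + 2 * co) := by ring
          linarith
        have hneg : 4 * co * (co - 1) * (c * (2 * co + 1) - 1) < 0 :=
          mul_neg_of_neg_of_pos (mul_neg_of_pos_of_neg (by positivity) (by linarith)) hfac
        linarith
      have h1 : Real.sqrt D < R' := (Real.sqrt_lt' hR'pos).mpr hDR
      rw [hR'_def] at h1
      linarith
  · -- value at c♯
    rw [rateDR, if_neg (by push_neg; exact hsharp_lt)]
    have hDval : (1 / (1 + 2 * co)) ^ 2 * Real.cos (2 * θ) ^ 2 - 2 * (1 / (1 + 2 * co)) + 1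
        = (2 * co ^ 2 / (1 + 2 * co)) ^ 2 := by
      rw [hc2]; field_simp; ring
    rw [hDval, Real.sqrt_sq (by positivity), hc2]
    field_simp
    ring
  · -- uniqueness
    rintro c ⟨hc0, hcu⟩ heq
    rw [rateDR, if_neg (by push_neg; exact hcu)] at heq
    set D := c ^ 2 * Real.cos (2 * θ) ^ 2 - 2 * c + 1 with hD_def
    have hsqrtD : Real.sqrt D = 2 * co - 1 - c * Real.cos (2 * θ) := by linarith
    have hc1 : c < 1 := lt_trans hcu hcstar_lt1
    have hR'pos : 0 < 2 * co - 1 - c * Real.cos (2 * θ) := by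
      rw [hc2]
      have h2co2 : 0 ≤ 2 * co ^ 2 - 1 := by rw [hc2] at hc2nn; linarith
      have h1 : 0 ≤ (1 - c) * (2 * co ^ 2 - 1) := mul_nonneg (by linarith) h2co2
      nlinarith [mul_pos hco (by linarith : (0:ℝ) < 1 - co)]
    have hD0 : 0 ≤ D := by
      by_contra h
      push_neg at h
      rw [Real.sqrt_eq_zero'.mpr h.le] at hsqrtD
      linarith
    have hDsq : D = (2 * co - 1 - c * Real.cos (2 * θ)) ^ 2 := by
      rw [← hsqrtD, Real.sq_sqrt hD0]
    have key : D - (2 * co - 1 - c * Real.cos (2 * θ)) ^ 2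
        = 4 * co * (co - 1) * (c * (2 * co + 1) - 1) := by
      rw [hD_def, hc2]; ring
    have hzero : 4 * co * (co - 1) * (c * (2 * co + 1) - 1) = 0 := by
      rw [← key, hDsq]; ring
    have hfac : c * (2 * co + 1) - 1 = 0 := by
      rcases mul_eq_zero.mp hzero with h | h
      · exfalso
        rcases mul_eq_zero.mp h with h' | h'
        · nlinarith
        · linarith
      · exact h
    rw [eq_div_iff (ne_of_gt h2co)]
    linear_combination hfac
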